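/- Let (X,T) be a topological dynamical system on a compact metric space, and k ∈ ℕ. If for every non-empty open U ⊆ X there exists n ∈ ℕ with U ∩ T^{-n}U ∩ ... ∩ T^{-(k-1)n}U ≠ ∅, then the set of k-recurrent points of X is residual (comeager). -/

import Mathlib

open Set Filter

theorem kRecurrent_residual {X : Type*} [MetricSpace X] [CompactSpace X] (T : X ≃ₜ X)
    (k : ℕ)
    (hrec : ∀ U : Set X, IsOpen U → U.Nonempty →
      ∃ n : ℕ, 0 < n ∧ ∃ x ∈ U, ∀ i < k, (⇑T)^[i * n] x ∈ U) :
    {x : X | ∃ n : ℕ → ℕ, StrictMono n ∧ (∀ j, 0 < n j) ∧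
      ∀ ε : ℝ, 0 < ε → ∃ J : ℕ, ∀ j : ℕ, J ≤ j → ∀ i < k,
        dist x ((⇑T)^[i * n j] x) < ε} ∈ residual X := by
  by_cases hk : k ≤ 1
  · apply Filter.mem_of_superset Filter.univ_mem
    intro x _
    refine ⟨fun j => j + 1, fun a b h => Nat.succ_lt_succ h, fun j => Nat.succ_pos j, ?_⟩
    intro ε hε
    refine ⟨0, fun j _ i hi => ?_⟩
    have : i = 0 := by omega
    subst this
    simpa using hε
  push_neg at hk
  set A : ℕ → Set X := fun q =>
    {x | ∃ n, 0 < n ∧ ∀ i < k, dist x ((⇑T)^[i * n] x) < 1/(q+1)} with hAdef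
  have hopen : ∀ q, IsOpen (A q) := by
    intro q
    have : A q = ⋃ n : ℕ, ⋃ _ : 0 < n, ⋂ i ∈ Finset.range k,
        {x | dist x ((⇑T)^[i * n] x) < 1/(q+1)} := by
      ext x
      simp [hAdef, Finset.mem_range]
    rw [this]
    refine isOpen_iUnion fun n => isOpen_iUnion fun _ => isOpen_biInter_finset fun i _ => ?_
    exact isOpen_lt (continuous_id.dist (T.continuous.iterate (i * n))) continuous_const
  have hdense : ∀ q, Dense (A q) := by
    intro q
    rw [dense_iff_inter_open]
    intro U hU hUne
    obtain ⟨x₀, hx₀⟩ := hUne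
    obtain ⟨r, hr, hball⟩ := Metric.isOpen_iff.mp hU x₀ hx₀
    have hq : (0:ℝ) < 1/(2*((q:ℝ)+1)) := by positivity
    set r' : ℝ := min r (1/(2*((q:ℝ)+1))) with hr'
    have hr'pos : 0 < r' := lt_min hr hq
    obtain ⟨n, hn, x, hxmem, hx⟩ := hrec (Metric.ball x₀ r') Metric.isOpen_ball
      ⟨x₀, Metric.mem_ball_self hr'pos⟩
    refine ⟨x, hball (Metric.ball_subset_ball (min_le_left _ _) hxmem), n, hn,
      fun i hi => ?_⟩
    · have h1 : dist x x₀ < r' := hxmem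
      have h2 : dist x₀ ((⇑T)^[i * n] x) < r' := by
        have := hx i hi
        rw [Metric.mem_ball, dist_comm] at this
        exact this
      have h3 : dist x ((⇑T)^[i * n] x) < r' + r' :=
        lt_of_le_of_lt (dist_triangle x x₀ _) (add_lt_add h1 h2)
      have h4 : r' + r' ≤ 1/((q:ℝ)+1) := by
        have h6 : r' ≤ 1/(2*((q:ℝ)+1)) := min_le_right _ _
        have h5 : 1/(2*((q:ℝ)+1)) + 1/(2*((q:ℝ)+1)) = 1/((q:ℝ)+1) := by
          rw [← add_div, div_eq_div_iff (by positivity) (by positivity)]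
          ring
        linarith
      linarith
  have hmem : (⋂ q, A q) ∈ residual X :=
    countable_iInter_mem.mpr fun q => residual_of_dense_open (hopen q) (hdense q)
  refine Filter.mem_of_superset hmem ?_
  intro x hx
  simp only [Set.mem_iInter] at hx
  -- From hx, derive: for every ε > 0 there is n > 0 with all distances < ε
  have hx' : ∀ ε : ℝ, 0 < ε → ∃ n, 0 < n ∧ ∀ i < k, dist x ((⇑T)^[i * n] x) < ε := by
    intro ε hε
    obtain ⟨q, hq⟩ := exists_nat_one_div_lt hε
    obtain ⟨n, hn, hd⟩ := hx q
    exact ⟨n, hn, fun i hi => lt_trans (hd i hi) hq⟩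
  -- Key: for every N and ε > 0 there is n > N with all distances < ε
  have key : ∀ N : ℕ, ∀ j : ℕ, ∃ n, N < n ∧ ∀ i < k,
      dist x ((⇑T)^[i * n] x) < 1/(j+1) := by
    intro N j
    have hεj : (0:ℝ) < 1/((j:ℝ)+1) := by positivity
    by_cases hper : ∃ n₀, 0 < n₀ ∧ ∀ i < k, (⇑T)^[i * n₀] x = x
    · obtain ⟨n₀, hn₀, hfix⟩ := hper
      have hfix1 : (⇑T)^[n₀] x = x := by simpa using hfix 1 hk
      have hmul : ∀ m : ℕ, (⇑T)^[m * n₀] x = x := by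
        intro m
        induction m with
        | zero => simp
        | succ m ih =>
          have : (m+1) * n₀ = m * n₀ + n₀ := by ring
          rw [this, Function.iterate_add_apply, hfix1, ih]
      refine ⟨(N+1) * n₀, ?_, fun i hi => ?_⟩
      · calc N < N + 1 := Nat.lt_succ_self N
          _ ≤ (N+1) * n₀ := Nat.le_mul_of_pos_right _ hn₀
      · have : i * ((N+1) * n₀) = (i * (N+1)) * n₀ := by ring
        rw [this, hmul]
        simpa using hεj
    · push_neg at hper
      -- Every positive n ≤ N has some i < k with T^[i*n] x ≠ x; get a uniform δ
      have hδ : ∃ δ : ℝ, 0 < δ ∧ ∀ n, 0 < n → n ≤ N → ∃ i < k,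
          δ ≤ dist x ((⇑T)^[i * n] x) := by
        clear hx hx'
        induction N with
        | zero => exact ⟨1, one_pos, fun n hn hn' => absurd (lt_of_lt_of_le hn hn') (lt_irrefl 0)⟩
        | succ N ih =>
          obtain ⟨δ, hδpos, hδ⟩ := ih
          obtain ⟨i, hi, hne⟩ := hper (N+1) (Nat.succ_pos N)
          have hd : 0 < dist x ((⇑T)^[i * (N+1)] x) := dist_pos.mpr fun h => hne h.symm
          refine ⟨min δ (dist x ((⇑T)^[i * (N+1)] x)), lt_min hδpos hd, fun n hn hn' => ?_⟩
          rcases Nat.lt_or_ge n (N+1) with h | h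
          · obtain ⟨i', hi', hle⟩ := hδ n hn (by omega)
            exact ⟨i', hi', le_trans (min_le_left _ _) hle⟩
          · have hEq : n = N + 1 := le_antisymm hn' h
            subst hEq
            exact ⟨i, hi, min_le_right _ _⟩
      obtain ⟨δ, hδpos, hδ⟩ := hδ
      obtain ⟨n, hn, hd⟩ := hx' (min δ (1/((j:ℝ)+1))) (lt_min hδpos hεj)
      refine ⟨n, ?_, fun i hi => lt_of_lt_of_le (hd i hi) (min_le_right _ _)⟩
      by_contra hle
      push_neg at hle
      obtain ⟨i, hi, hge⟩ := hδ n hn hle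
      exact absurd (lt_of_lt_of_le (hd i hi) (min_le_left _ _)) (not_lt.mpr hge)
  -- Build the strictly monotone sequence
  choose F hF1 hF2 using key
  set seq : ℕ → ℕ := fun j => Nat.rec (F 0 0) (fun j ih => F ih (j+1)) j with hseq
  have hseq0 : seq 0 = F 0 0 := rfl
  have hseqS : ∀ j, seq (j+1) = F (seq j) (j+1) := fun j => rfl
  have hmono : StrictMono seq := by
    apply strictMono_nat_of_lt_succ
    intro j
    rw [hseqS]
    exact hF1 (seq j) (j+1)
  have hpos : ∀ j, 0 < seq j := by
    intro j
    cases j with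
    | zero => exact hF1 0 0
    | succ j => exact Nat.lt_of_le_of_lt (Nat.zero_le _) (hmono (Nat.lt_succ_self j))
  have hest : ∀ j, ∀ i < k, dist x ((⇑T)^[i * seq j] x) < 1/((j:ℝ)+1) := by
    intro j
    cases j with
    | zero => exact hF2 0 0
    | succ j => exact hF2 (seq j) (j+1)
  refine ⟨seq, hmono, hpos, fun ε hε => ?_⟩
  obtain ⟨J, hJ⟩ := exists_nat_one_div_lt hε
  refine ⟨J, fun j hj i hi => ?_⟩
  refine lt_of_lt_of_le (hest j i hi) (le_trans ?_ (le_of_lt hJ))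
  apply one_div_le_one_div_of_le (by positivity)
  have := (Nat.cast_le (α := ℝ)).mpr hj
  linarith
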